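/- If a territory τ is extendable with a transition t, then the extended territory extend(t,τ) is a territory, and τ ▷t extend(t,τ) holds. -/

import Mathlib

/-!
Common semantic framework for "The Ghosts of Empires":
Petri programs, Hoare triples, invariant domains, Owicki-Gries annotations,
territories, empires, saturated empires, focus.
-/

namespace GhostsOfEmpires

/-- Reachable states of a (partial) state machine with transition alphabet `T`. -/
inductive EmpReach {Q T : Type*} (q0 : Q) (δ : Q → T → Option Q) : Q → Prop
  | init : EmpReach q0 δ q0
  | step {q : Q} {t : T} {q' : Q} : EmpReach q0 δ q → δ q t = some q' → EmpReach q0 δ q'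

/-- Restriction of a partial transition function to the reachable part. -/
def restrictδ {Q T : Type*} (q0 : Q) (δ : Q → T → Option Q)
    (q : {q : Q // EmpReach q0 δ q}) (t : T) : Option {q : Q // EmpReach q0 δ q} :=
  match h : δ q.val t with
  | none => none
  | some q' => some ⟨q', EmpReach.step q.property h⟩

/-- A Petri program: places, transitions, flow relation (given by `pre`/`post`),
initial marking, statement labels, error places, and a semantics for statements
(formulas over the program variables are modelled semantically as predicates on `State`,
the type of valuations of the program variables). Since the program is assumed one-safe,
markings are identified with sets of places. -/
structure PetriNet (Place Trans Stmt State : Type*) where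
  pre : Trans → Set Place
  post : Trans → Set Place
  mInit : Set Place
  label : Trans → Stmt
  err : Set Place
  sem : Stmt → State → State → Prop

/-- Owicki-Gries annotation: ghost state type `GS` (the product of the domains of the
ghost variables), invariant mapping `ω` (formulas over program and ghost variables),
ghost update mapping `γ` (executed after the statement of the transition), and
initial ghost valuation `ρ`. -/
structure OG (Place Trans State GS : Type*) where
  ω : Place → State → GS → Prop
  γ : Trans → State → GS → GS
  ρ : GS

/-- The data of an empire: a state machine with laws and territories. -/
structure EmpireData (Place Trans State Q : Type*) where
  qInit : Q
  δ : Q → Trans → Option Q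
  law : Q → State → Prop
  terr : Q → Set (Set Place)

/-- `Q_p`: the set of empire states whose territory contains `p` in some region. -/
def Qp {Place Trans State Q : Type*} (E : EmpireData Place Trans State Q) (p : Place) :
    Set Q :=
  {q | ∃ r ∈ E.terr q, p ∈ r}

/-- The imperial Owicki-Gries annotation of an empire: one ghost variable `g` ranging
over the states `Q`, initialized to `qInit`, updated according to `δ`, and
`ω(p) = ⋁_{q ∈ Q_p} (g = q ∧ law q)`. -/
def imperialOG {Place Trans State Q : Type*} (E : EmpireData Place Trans State Q) :
    OG Place Trans State Q where
  ω := fun p s g => ∃ q ∈ Qp E p, g = q ∧ E.law q s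
  γ := fun t _ g => (E.δ g t).getD g
  ρ := E.qInit

/-- Restriction of an empire given by raw data to its reachable part. -/
def restrictEmpire {Place Trans State Q : Type*} (q0 : Q) (δ0 : Q → Trans → Option Q)
    (law : Q → State → Prop) (terr : Q → Set (Set Place)) :
    EmpireData Place Trans State {q : Q // EmpReach q0 δ0 q} where
  qInit := ⟨q0, EmpReach.init⟩
  δ := restrictδ q0 δ0
  law := fun q => law q.val
  terr := fun q => terr q.val

/-- `m ∈ ⟦τ⟧`: `m` is derived by taking exactly one place from each region of `τ`. -/
def InTreaty {Place : Type*} (τ : Set (Set Place)) (m : Set Place) : Prop :=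
  ∃ f : Set Place → Place, (∀ r ∈ τ, f r ∈ r) ∧ m = {p | ∃ r ∈ τ, p = f r}

namespace PetriNet

variable {Place Trans Stmt State : Type*} (N : PetriNet Place Trans Stmt State)

/-- `m ▷t m'`: transition `t` is enabled in `m` and firing it yields `m'`. -/
def fires (m : Set Place) (t : Trans) (m' : Set Place) : Prop :=
  N.pre t ⊆ m ∧ m' = (m \ N.pre t) ∪ N.post t

/-- Firing sequences. -/
inductive FiringSeq : Set Place → List Trans → Set Place → Prop
  | nil (m : Set Place) : FiringSeq m [] m
  | cons {m m' m'' : Set Place} {t : Trans} {ts : List Trans} :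
      N.fires m t m' → FiringSeq m' ts m'' → FiringSeq m (t :: ts) m''

/-- A marking is reachable if some firing sequence from the initial marking ends in it. -/
def Reachable (m : Set Place) : Prop := ∃ ts, N.FiringSeq N.mInit ts m

/-- The Hoare triple `{φ} st {ψ}` holds. -/
def Hoare (φ : State → Prop) (st : Stmt) (ψ : State → Prop) : Prop :=
  ∀ s s', φ s → N.sem st s s' → ψ s'

/-- Semantics of a sequence of statements. -/
inductive SeqSem : List Stmt → State → State → Prop
  | nil (s : State) : SeqSem [] s s
  | cons {st : Stmt} {sts : List Stmt} {s s' s'' : State} :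
      N.sem st s s' → SeqSem sts s' s'' → SeqSem (st :: sts) s s''

/-- The Petri program is correct: for every firing sequence reaching a marking that
contains an error place, the Hoare triple `{⊤} λ(t1)...λ(tn) {⊥}` holds. -/
def Correct : Prop :=
  ∀ ts m, N.FiringSeq N.mInit ts m → (m ∩ N.err).Nonempty →
    ∀ s s', N.SeqSem (List.map N.label ts) s s' → False

/-- `p` and `t` are co-marked. -/
def coMarked (p : Place) (t : Trans) : Prop :=
  p ∉ N.pre t ∧ ∃ m, N.Reachable m ∧ p ∈ m ∧ N.pre t ⊆ m

/-- Two places are co-related. -/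
def coRelated (p p' : Place) : Prop :=
  p ≠ p' ∧ ∃ m, N.Reachable m ∧ p ∈ m ∧ p' ∈ m

/-- A region: a nonempty set of places that are pairwise not co-related. -/
def IsRegion (r : Set Place) : Prop :=
  r.Nonempty ∧ ∀ p1 ∈ r, ∀ p2 ∈ r, ¬ N.coRelated p1 p2

/-- A territory: a set of pairwise disjoint regions all of whose treaty members are
reachable markings. -/
def IsTerritory (τ : Set (Set Place)) : Prop :=
  (∀ r ∈ τ, N.IsRegion r) ∧
  (∀ r1 ∈ τ, ∀ r2 ∈ τ, r1 ≠ r2 → r1 ∩ r2 = ∅) ∧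
  (∀ m, InTreaty τ m → N.Reachable m)

/-- `t` is enabled in the territory `τ`: every predecessor place lies in a distinct
region of `τ`. -/
def terrEnabled (t : Trans) (τ : Set (Set Place)) : Prop :=
  ∃ f : Place → Set Place, (∀ p ∈ N.pre t, f p ∈ τ ∧ p ∈ f p) ∧
    ∀ p1 ∈ N.pre t, ∀ p2 ∈ N.pre t, p1 ≠ p2 → f p1 ≠ f p2

/-- `τ ▷t τ'`: the firing relation on territories. -/
def terrFires (τ : Set (Set Place)) (t : Trans) (τ' : Set (Set Place)) : Prop :=
  ∃ f f' : Place → Set Place,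
    (∀ p ∈ N.pre t, f p ∈ τ ∧ p ∈ f p) ∧
    (∀ p1 ∈ N.pre t, ∀ p2 ∈ N.pre t, p1 ≠ p2 → f p1 ≠ f p2) ∧
    (∀ p ∈ N.post t, N.IsRegion (f' p) ∧ p ∈ f' p) ∧
    (∀ p1 ∈ N.post t, ∀ p2 ∈ N.post t, p1 ≠ p2 → f' p1 ≠ f' p2) ∧
    τ' = (τ \ {r | ∃ p ∈ N.pre t, r = f p}) ∪ {r | ∃ p ∈ N.post t, r = f' p}

/-- The bystander regions of `t` in `τ`. -/
def bystanders (t : Trans) (τ : Set (Set Place)) : Set (Set Place) :=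
  {r ∈ τ | r ∩ N.pre t = ∅}

/-- The replaced territory `replace(t,τ)`. -/
def replaceT (t : Trans) (τ : Set (Set Place)) : Set (Set Place) :=
  N.bystanders t τ ∪ {r | ∃ p ∈ N.post t, r = {p}}

/-- `τ` is extendable with `t`. -/
def extendable (t : Trans) (τ : Set (Set Place)) : Prop :=
  N.terrEnabled t τ ∧ (∃ p, N.pre t = {p}) ∧ (∃ p', N.post t = {p'}) ∧
    ∀ r ∈ τ, (r ∩ N.pre t).Nonempty → ∀ p'' ∈ r, ∀ p' ∈ N.post t, ¬ N.coRelated p' p''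

/-- The extended territory `extend(t,τ)`: the (unique) region meeting `•t` is enlarged
by the successor place. -/
def extendT (t : Trans) (τ : Set (Set Place)) : Set (Set Place) :=
  N.bystanders t τ ∪ {r' | ∃ r ∈ τ, (r ∩ N.pre t).Nonempty ∧ r' = r ∪ N.post t}

/-- An invariant domain for `N`: a finite set `A` of formulas (modelled semantically)
containing `⊥` and `⊤`, and a post operator such that `{φ} λ(t) {post(φ,t)}` always holds. -/
structure InvDomain where
  A : Set (State → Prop)
  postF : (State → Prop) → Trans → (State → Prop)
  finA : A.Finite
  bot_mem : (fun _ => False) ∈ A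
  top_mem : (fun _ => True) ∈ A
  post_mem : ∀ φ ∈ A, ∀ t, postF φ t ∈ A
  post_hoare : ∀ φ ∈ A, ∀ t, N.Hoare φ (N.label t) (postF φ t)

/-- Reachable abstract configurations, generically over a type `Φ` of laws with a post
operator `postA` and top element `φtop`. -/
inductive AbsReachG {Φ : Type*} (postA : Φ → Trans → Φ) (φtop : Φ) : Set Place → Φ → Prop
  | init : AbsReachG postA φtop N.mInit φtop
  | step {m : Set Place} {φ : Φ} {t : Trans} {m' : Set Place} :
      AbsReachG postA φtop m φ → N.fires m t m' → AbsReachG postA φtop m' (postA φ t)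

/-- The invariant domain is safe: every reachable abstract configuration at a marking
containing an error place has law equivalent to `⊥`. -/
def SafeDomain (D : InvDomain N) : Prop :=
  ∀ m φ, N.AbsReachG D.postF (fun _ => True) m φ → (m ∩ N.err).Nonempty → ∀ s, ¬ φ s

/-- Validity of an Owicki-Gries annotation: initial, inductive, interference-free, safe. -/
structure OGValid {GS : Type*} (og : OG Place Trans State GS) : Prop where
  initialCond : ∀ p ∈ N.mInit, ∀ s, og.ω p s og.ρ
  inductiveCond : ∀ t s g s', (∀ p ∈ N.pre t, og.ω p s g) →
    N.sem (N.label t) s s' → ∀ p ∈ N.post t, og.ω p s' (og.γ t s' g)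
  interferenceFree : ∀ t p, N.coMarked p t → ∀ s g s',
    og.ω p s g → (∀ p' ∈ N.pre t, og.ω p' s g) →
    N.sem (N.label t) s s' → og.ω p s' (og.γ t s' g)
  safeCond : ∀ p ∈ N.err, ∀ s g, ¬ og.ω p s g

/-- The naive Owicki-Gries annotation `OG_naive(A,post)`: the ghost state is the set of
places `p` whose boolean ghost variable `g_p` is true; `ω(p)` is the disjunction over all
reachable markings `m` containing `p` of `χ(m) ∧ β(m)`. -/
def naiveOG (D : InvDomain N) : OG Place Trans State (Set Place) where
  ω := fun p s g => ∃ m, N.Reachable m ∧ p ∈ m ∧ g = m ∧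
    ∃ φ, N.AbsReachG D.postF (fun _ => True) m φ ∧ φ s
  γ := fun t _ g => (g \ (N.pre t \ N.post t)) ∪ (N.post t \ N.pre t)
  ρ := N.mInit

/-- Validity of an empire. -/
structure ValidEmpire {Q : Type*} (E : EmpireData Place Trans State Q) : Prop where
  terrOK : ∀ q, N.IsTerritory (E.terr q)
  initialLaw : ∀ s, E.law E.qInit s
  initialTerr : InTreaty (E.terr E.qInit) N.mInit
  inductiveLaw : ∀ q t, N.terrEnabled t (E.terr q) →
    (∃ q', E.δ q t = some q' ∧ N.Hoare (E.law q) (N.label t) (E.law q')) ∨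
      N.Hoare (E.law q) (N.label t) (fun _ => False)
  inductiveTerr : ∀ q t q', E.δ q t = some q' → N.terrFires (E.terr q) t (E.terr q')
  safeCond : ∀ q, (∃ r ∈ E.terr q, (r ∩ N.err).Nonempty) → ∀ s, ¬ E.law q s

/-- The initial territory `τ_init = {{p} | p ∈ m_init}`. -/
def tauInit : Set (Set Place) := {r | ∃ p ∈ N.mInit, r = {p}}

/-- `SaturateG postA φ rb τ τ'` means `τ' ∈ saturate(φ, rb, τ)` (saturated successors). -/
inductive SaturateG {Φ : Type*} (postA : Φ → Trans → Φ) (φ : Φ) (rb : Set (Set Place)) :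
    Set (Set Place) → Set (Set Place) → Prop
  | base {τ : Set (Set Place)} :
      (¬ ∃ t, N.extendable t τ ∧ ¬ N.terrFires τ t τ ∧ postA φ t = φ ∧
        rb ⊆ N.bystanders t τ) →
      SaturateG postA φ rb τ τ
  | step {τ : Set (Set Place)} {t : Trans} {τ' : Set (Set Place)} :
      N.extendable t τ → ¬ N.terrFires τ t τ → postA φ t = φ →
      rb ⊆ N.bystanders t τ → SaturateG postA φ rb (N.extendT t τ) τ' →
      SaturateG postA φ rb τ τ'

/-- `(q0, δ0)` is the data of a saturated empire (before restriction to the reachable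
part), generically over a type `Φ` of laws with post operator `postA`, interpretation
`interp` and top element `φtop`. -/
structure IsSaturatedG {Φ : Type*} (postA : Φ → Trans → Φ) (interp : Φ → State → Prop)
    (φtop : Φ) (q0 : Set (Set Place) × Φ)
    (δ0 : Set (Set Place) × Φ → Trans → Option (Set (Set Place) × Φ)) : Prop where
  initCond : ∃ τ, N.SaturateG postA φtop ∅ N.tauInit τ ∧ q0 = (τ, φtop)
  undefCond : ∀ τ φ t, (¬ N.terrEnabled t τ ∨ ∀ s, ¬ interp (postA φ t) s) →
    δ0 (τ, φ) t = none
  selfCond : ∀ τ φ t, N.terrEnabled t τ → (∃ s, interp (postA φ t) s) →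
    N.terrFires τ t τ → postA φ t = φ → δ0 (τ, φ) t = some (τ, φ)
  stepCond : ∀ τ φ t, N.terrEnabled t τ → (∃ s, interp (postA φ t) s) →
    ¬ (N.terrFires τ t τ ∧ postA φ t = φ) →
    ∃ τ', N.SaturateG postA (postA φ t) (N.bystanders t τ) (N.replaceT t τ) τ' ∧
      δ0 (τ, φ) t = some (τ', postA φ t)

open Classical in
/-- The transition function of the naive empire. -/
noncomputable def naiveδ (D : InvDomain N) (q : Set (Set Place) × (State → Prop))
    (t : Trans) : Option (Set (Set Place) × (State → Prop)) :=
  if N.terrEnabled t q.1 ∧ ∃ s, D.postF q.2 t s then some (N.replaceT t q.1, D.postF q.2 t)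
  else none

/-- The naive empire `E_naive(A,post)`: the reachable part of the empire whose states are
pairs of territories and laws, with initial state `⟨τ_init, ⊤⟩`. -/
noncomputable def naiveEmpire (D : InvDomain N) :
    EmpireData Place Trans State
      {q : Set (Set Place) × (State → Prop) //
        EmpReach (N.tauInit, fun _ => True) (N.naiveδ D) q} :=
  restrictEmpire (N.tauInit, fun _ => True) (N.naiveδ D) Prod.snd Prod.fst

open Classical in
/-- The product post operator of a family of invariant domains, acting on vectors of
component formulas (the vector `φv` represents the conjunction `⋀_i φv i`). -/
noncomputable def prodPost {n : ℕ} (Ds : Fin n → InvDomain N)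
    (φv : Fin n → State → Prop) (t : Trans) : Fin n → State → Prop :=
  if ∀ i, ∃ s, (Ds i).postF (φv i) t s then fun i => (Ds i).postF (φv i) t
  else fun _ _ => False

/-- Safety of the product invariant domain. -/
def prodSafe {n : ℕ} (Ds : Fin n → InvDomain N) : Prop :=
  ∀ m φv, N.AbsReachG (N.prodPost Ds) (fun _ _ => True) m φv →
    (m ∩ N.err).Nonempty → ∀ s, ¬ ∀ i, φv i s

/-- A focus on a saturated empire (given by raw data `(q0, δ0)` over vector laws). -/
structure IsFocus {n : ℕ} (Ds : Fin n → InvDomain N)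
    (q0 : Set (Set Place) × (Fin n → State → Prop))
    (δ0 : Set (Set Place) × (Fin n → State → Prop) → Trans →
      Option (Set (Set Place) × (Fin n → State → Prop)))
    (ℓ : Set (Set Place) × (Fin n → State → Prop) → Set Place → Set (Fin n)) :
    Prop where
  safeCond : ∀ q, EmpReach q0 δ0 q → ∀ t, N.terrEnabled t q.1 → δ0 q t = none →
    ∃ r ∈ q.1, ∃ i, (r ∩ N.pre t).Nonempty ∧ (∀ s, ¬ (Ds i).postF (q.2 i) t s) ∧ i ∈ ℓ q r
  inductiveEdge : ∀ q q' t, EmpReach q0 δ0 q → δ0 q t = some q' →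
    ∀ r' ∈ q'.1, (r' ∩ N.post t).Nonempty → ∀ i ∈ ℓ q' r',
      ∃ r ∈ q.1, (r ∩ N.pre t).Nonempty ∧ i ∈ ℓ q r
  bystandersCond : ∀ q q' t, EmpReach q0 δ0 q → δ0 q t = some q' →
    ∀ r ∈ N.bystanders t q.1, ∀ i ∈ ℓ q' r, i ∈ ℓ q r

end PetriNet

/-- A saturated empire (over scalar laws): the reachable part of the data `(q0, δ0)`. -/
def saturatedEmpire {Place Trans State : Type*}
    (q0 : Set (Set Place) × (State → Prop))
    (δ0 : Set (Set Place) × (State → Prop) → Trans →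
      Option (Set (Set Place) × (State → Prop))) :
    EmpireData Place Trans State {q // EmpReach q0 δ0 q} :=
  restrictEmpire q0 δ0 Prod.snd Prod.fst

/-- The focused law `law_p(q) = ⋀ {φ_i | ∃ r ∈ terr(q). i ∈ ℓ(q,r) ∧ p ∈ r}`. -/
def lawP {Place State : Type*} {n : ℕ}
    (ℓ : Set (Set Place) × (Fin n → State → Prop) → Set Place → Set (Fin n))
    (q : Set (Set Place) × (Fin n → State → Prop)) (p : Place) : State → Prop :=
  fun s => ∀ i, (∃ r ∈ q.1, i ∈ ℓ q r ∧ p ∈ r) → q.2 i s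

/-- `law_X(q) = ⋀_{p ∈ X} law_p(q)`. -/
def lawX {Place State : Type*} {n : ℕ}
    (ℓ : Set (Set Place) × (Fin n → State → Prop) → Set Place → Set (Fin n))
    (q : Set (Set Place) × (Fin n → State → Prop)) (X : Set Place) : State → Prop :=
  fun s => ∀ p ∈ X, lawP ℓ q p s

/-- The focused imperial Owicki-Gries annotation `OG_{E,ℓ}` of the saturated empire
given by `(q0, δ0)` (restricted to its reachable part) with focus `ℓ`:
`ω(p) = ⋁_{q ∈ Q_p} (g = q ∧ law_p(q))`. -/
def focusedOG {Place Trans State : Type*} {n : ℕ}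
    (q0 : Set (Set Place) × (Fin n → State → Prop))
    (δ0 : Set (Set Place) × (Fin n → State → Prop) → Trans →
      Option (Set (Set Place) × (Fin n → State → Prop)))
    (ℓ : Set (Set Place) × (Fin n → State → Prop) → Set Place → Set (Fin n)) :
    OG Place Trans State {q // EmpReach q0 δ0 q} where
  ω := fun p s g => ∃ q : {q // EmpReach q0 δ0 q},
    (∃ r ∈ q.val.1, p ∈ r) ∧ g = q ∧ lawP ℓ q.val p s
  γ := fun t _ g => (restrictδ q0 δ0 g t).getD g
  ρ := ⟨q0, EmpReach.init⟩

end GhostsOfEmpires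

section Helpers
open GhostsOfEmpires
variable {Place Trans Stmt State : Type*} (N : PetriNet Place Trans Stmt State)

lemma coRelated_symm' {p q : Place} (h : N.coRelated p q) : N.coRelated q p := by
  obtain ⟨hne, m, hm, h1, h2⟩ := h
  exact ⟨hne.symm, m, hm, h2, h1⟩

lemma firingSeq_append' {m m' m'' : Set Place} {ts : List Trans} {t : Trans}
    (h : N.FiringSeq m ts m') (h' : N.fires m' t m'') :
    N.FiringSeq m (ts ++ [t]) m'' := by
  induction h with
  | nil m => exact .cons h' (.nil _)
  | cons hf _ ih => exact .cons hf (ih h')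

lemma reachable_step' {m m' : Set Place} {t : Trans}
    (h : N.Reachable m) (h' : N.fires m t m') : N.Reachable m' := by
  obtain ⟨ts, hts⟩ := h
  exact ⟨ts ++ [t], firingSeq_append' N hts h'⟩

end Helpers

open GhostsOfEmpires in
/-- If a territory `τ` is extendable with a transition `t`, then the
extended territory `extend(t,τ)` is a territory, and `τ ▷t extend(t,τ)` holds. -/
theorem statement11 {Place Trans Stmt State : Type*}
    [Fintype Place] [Fintype Trans] [Fintype Stmt]
    (N : PetriNet Place Trans Stmt State)
    (τ : Set (Set Place)) (hτ : N.IsTerritory τ) (t : Trans)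
    (h : N.extendable t τ) :
    N.IsTerritory (N.extendT t τ) ∧ N.terrFires τ t (N.extendT t τ) := by
  classical
  obtain ⟨hen, ⟨p, hpre⟩, ⟨p', hpost⟩, hext⟩ := h
  obtain ⟨f0, hf0, -⟩ := hen
  have hp_pre : p ∈ N.pre t := by rw [hpre]; exact rfl
  have hp'_post : p' ∈ N.post t := by rw [hpost]; exact rfl
  set r0 := f0 p with hr0def
  have hr0τ : r0 ∈ τ := (hf0 p hp_pre).1
  have hpr0 : p ∈ r0 := (hf0 p hp_pre).2
  obtain ⟨hreg, hdisj, htreaty⟩ := hτ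
  have uniq : ∀ r ∈ τ, p ∈ r → r = r0 := by
    intro r hr hpr
    by_contra hne
    have hd := hdisj r hr r0 hr0τ hne
    have : p ∈ r ∩ r0 := ⟨hpr, hpr0⟩
    rw [hd] at this
    exact this
  have notCo : ∀ p'' ∈ r0, ¬ N.coRelated p' p'' := by
    intro p'' hp''
    exact hext r0 hr0τ ⟨p, hpr0, hp_pre⟩ p'' hp'' p' hp'_post
  have hp'not : ∀ r ∈ τ, p ∉ r → p' ∉ r := by
    intro r hrτ hpnr hp'r
    have hne : r ≠ r0 := fun e => hpnr (e ▸ hpr0)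
    set g : Set Place → Place := fun s =>
      if s = r0 then p else if s = r then p' else
        if h : s.Nonempty then h.some else p with hgdef
    have hg : ∀ s ∈ τ, g s ∈ s := by
      intro s hs
      by_cases h1 : s = r0
      · subst h1; simp only [hgdef, if_pos rfl]; exact hpr0
      · by_cases h2 : s = r
        · subst h2; simp only [hgdef, if_neg h1, if_pos rfl]; exact hp'r
        · have hns : s.Nonempty := (hreg s hs).1
          simp only [hgdef, if_neg h1, if_neg h2, dif_pos hns]
          exact hns.some_mem
    have hreach : N.Reachable {q | ∃ s ∈ τ, q = g s} := htreaty _ ⟨g, hg, rfl⟩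
    have hpm : p ∈ {q | ∃ s ∈ τ, q = g s} := ⟨r0, hr0τ, by simp [hgdef]⟩
    have hp'm : p' ∈ {q | ∃ s ∈ τ, q = g s} :=
      ⟨r, hrτ, by simp [hgdef, if_neg hne]⟩
    have hnep : p' ≠ p := fun e => hpnr (e ▸ hp'r)
    exact notCo p hpr0 ⟨hnep, _, hreach, hp'm, hpm⟩
  have hext_eq : {r' | ∃ r ∈ τ, (r ∩ N.pre t).Nonempty ∧ r' = r ∪ N.post t}
      = {r0 ∪ N.post t} := by
    ext r'
    constructor
    · rintro ⟨r, hr, ⟨q, hq1, hq2⟩, rfl⟩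
      rw [hpre] at hq2
      have hq2' : q = p := hq2
      have : r = r0 := uniq r hr (hq2' ▸ hq1)
      simp [this]
    · rintro rfl
      exact ⟨r0, hr0τ, ⟨p, hpr0, hp_pre⟩, rfl⟩
  have hbyst2 : N.bystanders t τ = τ \ {r0} := by
    ext r
    simp only [PetriNet.bystanders, Set.mem_setOf_eq, Set.mem_diff,
      Set.mem_singleton_iff, hpre, Set.inter_singleton_eq_empty]
    constructor
    · rintro ⟨h1, h2⟩; exact ⟨h1, fun e => h2 (e ▸ hpr0)⟩
    · rintro ⟨h1, h2⟩; exact ⟨h1, fun hp => h2 (uniq r h1 hp)⟩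
  have hE : N.extendT t τ = (τ \ {r0}) ∪ {r0 ∪ N.post t} := by
    unfold PetriNet.extendT
    rw [hbyst2, hext_eq]
  have hregExt : N.IsRegion (r0 ∪ N.post t) := by
    refine ⟨⟨p, Or.inl hpr0⟩, ?_⟩
    intro p1 hp1 p2 hp2 hco
    rw [hpost] at hp1 hp2
    rcases hp1 with h1 | h1
    · rcases hp2 with h2 | h2
      · exact (hreg r0 hr0τ).2 p1 h1 p2 h2 hco
      · have h2' : p2 = p' := h2
        exact notCo p1 h1 (coRelated_symm' N (h2' ▸ hco))
    · have h1' : p1 = p' := h1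
      rcases hp2 with h2 | h2
      · exact notCo p2 h2 (h1' ▸ hco)
      · have h2' : p2 = p' := h2
        exact hco.1 (h1'.trans h2'.symm)
  have hdisjExt : ∀ r1 ∈ τ \ {r0}, r1 ∩ (r0 ∪ N.post t) = ∅ := by
    intro r1 hr1
    obtain ⟨hr1τ, hr1ne⟩ := hr1
    have hr1ne' : r1 ≠ r0 := hr1ne
    have hpnr1 : p ∉ r1 := fun hp => hr1ne' (uniq r1 hr1τ hp)
    have hd := hdisj r1 hr1τ r0 hr0τ hr1ne'
    have hp'nr1 : p' ∉ r1 := hp'not r1 hr1τ hpnr1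
    ext q
    simp only [Set.mem_inter_iff, Set.mem_union, Set.mem_empty_iff_false,
      iff_false, not_and, not_or]
    intro hq
    constructor
    · intro hq0
      have : q ∈ r1 ∩ r0 := ⟨hq, hq0⟩
      rw [hd] at this; exact this
    · intro hqp
      rw [hpost] at hqp
      have : q = p' := hqp
      exact hp'nr1 (this ▸ hq)
  have hterr : N.IsTerritory (N.extendT t τ) := by
    rw [hE]
    refine ⟨?_, ?_, ?_⟩
    · rintro r (⟨hrτ, -⟩ | hr)
      · exact hreg r hrτ
      · have : r = r0 ∪ N.post t := hr
        exact this ▸ hregExt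
    · rintro r1 (hr1 | hr1) r2 (hr2 | hr2) hne
      · exact hdisj r1 hr1.1 r2 hr2.1 hne
      · have : r2 = r0 ∪ N.post t := hr2
        exact this ▸ hdisjExt r1 hr1
      · have h1 : r1 = r0 ∪ N.post t := hr1
        rw [Set.inter_comm]
        exact h1 ▸ hdisjExt r2 hr2
      · have h1 : r1 = r0 ∪ N.post t := hr1
        have h2 : r2 = r0 ∪ N.post t := hr2
        exact absurd (h1.trans h2.symm) hne
    · rintro m ⟨f', hf', rfl⟩
      have hcmem : f' (r0 ∪ N.post t) ∈ r0 ∪ N.post t :=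
        hf' _ (Or.inr rfl)
      set c := f' (r0 ∪ N.post t) with hcdef
      by_cases hc0 : c ∈ r0
      · -- choose c from r0 in τ
        set g : Set Place → Place := fun s => if s = r0 then c else f' s with hgdef
        have hg : ∀ r ∈ τ, g r ∈ r := by
          intro r hr
          by_cases h1 : r = r0
          · subst h1; simp only [hgdef, if_pos rfl]; exact hc0
          · simp only [hgdef, if_neg h1]
            exact hf' r (Or.inl ⟨hr, h1⟩)
        have hmeq : {q | ∃ r ∈ (τ \ {r0}) ∪ {r0 ∪ N.post t}, q = f' r}
            = {q | ∃ r ∈ τ, q = g r} := by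
          ext q
          constructor
          · rintro ⟨r, hr | hr, rfl⟩
            · refine ⟨r, hr.1, ?_⟩
              have : r ≠ r0 := hr.2
              simp [hgdef, if_neg this]
            · have hr' : r = r0 ∪ N.post t := hr
              refine ⟨r0, hr0τ, ?_⟩
              simp [hgdef, hr', hcdef]
          · rintro ⟨r, hr, rfl⟩
            by_cases h1 : r = r0
            · subst h1
              refine ⟨r0 ∪ N.post t, Or.inr rfl, ?_⟩
              simp [hgdef]
              exact hcdef
            · exact ⟨r, Or.inl ⟨hr, h1⟩, by simp [hgdef, if_neg h1]⟩
        rw [hmeq]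
        exact htreaty _ ⟨g, hg, rfl⟩
      · -- c = p', fire t from a marking choosing p from r0
        have hcp' : c = p' := by
          rcases hcmem with h | h
          · exact absurd h hc0
          · rw [hpost] at h; exact h
        set g : Set Place → Place := fun s => if s = r0 then p else f' s with hgdef
        have hg : ∀ r ∈ τ, g r ∈ r := by
          intro r hr
          by_cases h1 : r = r0
          · subst h1; simp only [hgdef, if_pos rfl]; exact hpr0
          · simp only [hgdef, if_neg h1]
            exact hf' r (Or.inl ⟨hr, h1⟩)
        have hreach : N.Reachable {q | ∃ r ∈ τ, q = g r} := htreaty _ ⟨g, hg, rfl⟩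
        have hfire : N.fires {q | ∃ r ∈ τ, q = g r} t
            {q | ∃ r ∈ (τ \ {r0}) ∪ {r0 ∪ N.post t}, q = f' r} := by
          refine ⟨?_, ?_⟩
          · rw [hpre]
            rintro q hq
            have hq' : q = p := hq
            exact ⟨r0, hr0τ, by simp [hgdef, hq']⟩
          · rw [hpre, hpost]
            ext q
            simp only [Set.mem_setOf_eq, Set.mem_union, Set.mem_diff,
              Set.mem_singleton_iff]
            constructor
            · rintro ⟨r, hr | hr, rfl⟩
              · have hrτ : r ∈ τ := hr.1
                have hrne : r ≠ r0 := hr.2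
                have hpnr : p ∉ r := fun hp => hrne (uniq r hrτ hp)
                have hmem : f' r ∈ r := hf' r (Or.inl hr)
                refine Or.inl ⟨⟨r, hrτ, by simp [hgdef, if_neg hrne]⟩, ?_⟩
                intro e; exact hpnr (e ▸ hmem)
              · have hr' : r = r0 ∪ N.post t := by rw [hpost]; exact hr
                right
                rw [hr']; exact hcp'
            · rintro (⟨⟨r, hrτ, rfl⟩, hne⟩ | rfl)
              · by_cases h1 : r = r0
                · exfalso; apply hne; simp [hgdef, h1]
                · exact ⟨r, Or.inl ⟨hrτ, h1⟩, by simp [hgdef, if_neg h1]⟩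
              · exact ⟨r0 ∪ N.post t, Or.inr (by rw [hpost]), hcp'.symm⟩
        exact reachable_step' N hreach hfire
  refine ⟨hterr, fun _ => r0, fun _ => r0 ∪ N.post t, ?_, ?_, ?_, ?_, ?_⟩
  · intro q hq; exact ⟨hr0τ, by rw [hpre] at hq; exact hq ▸ hpr0⟩
  · intro q1 h1 q2 h2 hne
    rw [hpre] at h1 h2
    have h1' : q1 = p := h1
    have h2' : q2 = p := h2
    exact absurd (h1'.trans h2'.symm) hne
  · intro q hq; exact ⟨hregExt, Or.inr hq⟩
  · intro q1 h1 q2 h2 hne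
    rw [hpost] at h1 h2
    have h1' : q1 = p' := h1
    have h2' : q2 = p' := h2
    exact absurd (h1'.trans h2'.symm) hne
  · ext r
    rw [hE]
    constructor
    · rintro (⟨h1, h2⟩ | hr)
      · exact Or.inl ⟨h1, fun hh => by obtain ⟨q, -, e⟩ := hh; exact h2 e⟩
      · exact Or.inr ⟨p', hp'_post, hr⟩
    · rintro (⟨h1, h2⟩ | hh)
      · exact Or.inl ⟨h1, fun e => h2 ⟨p, hp_pre, e⟩⟩
      · obtain ⟨q, -, e⟩ := hh
        exact Or.inr e
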